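/- Let p ≥ 1, let T_p be an invertible p×p matrix over F₂, let n ≥ 0, and set G = T₂^{⊗n} ⊗ T_p, an invertible N×N matrix over F₂ with N = 2^n·p. Then for every K with 1 ≤ K ≤ N, the spectrum value S_G(K) equals the K-th largest element (counted with multiplicity) of the N-element multiset of products { S_{T₂^{⊗n}}(i) · S_{T_p}(j) : 1 ≤ i ≤ 2^n, 1 ≤ j ≤ p }. -/

import Mathlib

open Matrix

noncomputable section

abbrev F2 : Type := ZMod 2

/-- The Arikan kernel `T₂ = ((1,0),(1,1))` over `F₂`. -/
def T2 : Matrix (Fin 2) (Fin 2) F2 := !![1, 0; 1, 1]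

/-- Kronecker product of `Fin`-indexed square matrices, with the standard index
convention `(A ⊗ B) i j = A (i / n) (j / n) * B (i % n) (j % n)`. -/
def kron {m n : ℕ} (A : Matrix (Fin m) (Fin m) F2) (B : Matrix (Fin n) (Fin n) F2) :
    Matrix (Fin (m * n)) (Fin (m * n)) F2 :=
  fun i j => A i.divNat j.divNat * B i.modNat j.modNat

/-- The `n`-fold Kronecker power of `T₂` (with `T₂^{⊗0}` the 1×1 identity). -/
def T2pow : (n : ℕ) → Matrix (Fin (2 ^ n)) (Fin (2 ^ n)) F2
  | 0 => 1
  | n + 1 => (kron T2 (T2pow n)).submatrix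
      (Fin.cast (by rw [pow_succ, Nat.mul_comm]))
      (Fin.cast (by rw [pow_succ, Nat.mul_comm]))

/-- Minimum distance `d_G(I)`: the minimum Hamming weight of `u · G` over all
nonzero row vectors `u` with support contained in `I`. -/
def minDist {N : ℕ} (G : Matrix (Fin N) (Fin N) F2) (I : Finset (Fin N)) : ℕ :=
  sInf {w | ∃ u : Fin N → F2, u ≠ 0 ∧ (∀ i, u i ≠ 0 → i ∈ I) ∧
    hammingNorm (Matrix.vecMul u G) = w}

/-- Minimum-distance spectrum `S_G(K)`: the maximum of `d_G(I)` over all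
row-index sets `I` of size `K`. -/
def spec {N : ℕ} (G : Matrix (Fin N) (Fin N) F2) (K : ℕ) : ℕ :=
  sSup {d | ∃ I : Finset (Fin N), I.card = K ∧ minDist G I = d}

/-- `K`-th largest element (1-indexed, counted with multiplicity) of a
multiset of natural numbers. -/
def kthLargest (s : Multiset ℕ) (K : ℕ) : ℕ :=
  ((s.sort (· ≤ ·)).reverse).getD (K - 1) 0

-- basic lemmas
section Basic
variable {N : ℕ} (G : Matrix (Fin N) (Fin N) F2)

lemma minDist_le {I : Finset (Fin N)} {u : Fin N → F2} (hu : u ≠ 0)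
    (hsupp : ∀ i, u i ≠ 0 → i ∈ I) : minDist G I ≤ hammingNorm (Matrix.vecMul u G) :=
  Nat.sInf_le ⟨u, hu, hsupp, rfl⟩

lemma minDist_set_nonempty {I : Finset (Fin N)} (hI : I.Nonempty) :
    {w | ∃ u : Fin N → F2, u ≠ 0 ∧ (∀ i, u i ≠ 0 → i ∈ I) ∧
      hammingNorm (Matrix.vecMul u G) = w}.Nonempty := by
  obtain ⟨i, hi⟩ := hI
  refine ⟨_, Pi.single i 1, ?_, ?_, rfl⟩
  · intro h
    have := congrFun h i
    simp [Pi.single_eq_same] at this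
  · intro j hj
    by_contra hne
    rcases eq_or_ne j i with rfl | hji
    · exact hne hi
    · exact hj (Pi.single_eq_of_ne hji 1)

lemma minDist_exists {I : Finset (Fin N)} (hI : I.Nonempty) :
    ∃ u : Fin N → F2, u ≠ 0 ∧ (∀ i, u i ≠ 0 → i ∈ I) ∧
      hammingNorm (Matrix.vecMul u G) = minDist G I :=
  Nat.sInf_mem (minDist_set_nonempty G hI)

lemma le_minDist {I : Finset (Fin N)} (hI : I.Nonempty) {m : ℕ}
    (h : ∀ u : Fin N → F2, u ≠ 0 → (∀ i, u i ≠ 0 → i ∈ I) →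
      m ≤ hammingNorm (Matrix.vecMul u G)) : m ≤ minDist G I := by
  obtain ⟨u, hu, hs, hw⟩ := minDist_exists G hI
  exact hw ▸ h u hu hs

lemma minDist_anti {I I' : Finset (Fin N)} (hI : I.Nonempty) (hsub : I ⊆ I') :
    minDist G I' ≤ minDist G I := by
  obtain ⟨u, hu, hs, hw⟩ := minDist_exists G hI
  exact hw ▸ minDist_le G hu (fun i hi => hsub (hs i hi))

lemma hammingNorm_le_card {v : Fin N → F2} : hammingNorm v ≤ N := by
  simpa [hammingNorm] using (Finset.card_filter_le Finset.univ (fun i => v i ≠ 0))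

lemma minDist_le_N {I : Finset (Fin N)} (hI : I.Nonempty) : minDist G I ≤ N := by
  obtain ⟨u, hu, hs, hw⟩ := minDist_exists G hI
  exact hw ▸ hammingNorm_le_card

lemma spec_bddAbove (K : ℕ) (hK : 1 ≤ K) :
    BddAbove {d | ∃ I : Finset (Fin N), I.card = K ∧ minDist G I = d} := by
  refine ⟨N, fun d hd => ?_⟩
  obtain ⟨I, hI, rfl⟩ := hd
  exact minDist_le_N G (Finset.card_pos.mp (hI ▸ hK))

lemma spec_set_nonempty (K : ℕ) (hK : K ≤ N) :
    {d | ∃ I : Finset (Fin N), I.card = K ∧ minDist G I = d}.Nonempty := by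
  obtain ⟨I, -, hI⟩ := Finset.exists_subset_card_eq (s := (Finset.univ : Finset (Fin N)))
    (by simpa using hK)
  exact ⟨_, I, hI, rfl⟩

lemma spec_exists {K : ℕ} (hK : K ≤ N) (hK1 : 1 ≤ K) :
    ∃ I : Finset (Fin N), I.card = K ∧ minDist G I = spec G K :=
  Nat.sSup_mem (spec_set_nonempty G K hK) (spec_bddAbove G K hK1)

lemma minDist_le_spec {I : Finset (Fin N)} (hK1 : 1 ≤ I.card) :
    minDist G I ≤ spec G I.card :=
  le_csSup (spec_bddAbove G _ hK1) ⟨I, rfl, rfl⟩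

lemma spec_anti {K K' : ℕ} (hK1 : 1 ≤ K) (hKK' : K ≤ K') (hK' : K' ≤ N) :
    spec G K' ≤ spec G K := by
  obtain ⟨I', hcard, hval⟩ := spec_exists G hK' (hK1.trans hKK')
  obtain ⟨I, hsub, hIcard⟩ := Finset.exists_subset_card_eq (s := I') (hcard ▸ hKK')
  calc spec G K' = minDist G I' := hval.symm
    _ ≤ minDist G I := minDist_anti G (Finset.card_pos.mp (hIcard ▸ hK1)) hsub
    _ ≤ spec G I.card := minDist_le_spec G (hIcard ▸ hK1)
    _ = spec G K := by rw [hIcard]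

end Basic

lemma kthLargest_char {M : Multiset ℕ} {K m : ℕ} (hK1 : 1 ≤ K) (hK2 : K ≤ Multiset.card M) :
    m ≤ kthLargest M K ↔ K ≤ Multiset.card (M.filter (m ≤ ·)) := by
  classical
  set l := M.sort (· ≤ ·) with hldef
  have hsort : l.Pairwise (· ≤ ·) := M.pairwise_sort _
  have hlen : l.length = Multiset.card M := M.length_sort _
  have hidx : K - 1 < l.reverse.length := by rw [List.length_reverse]; omega
  set j := l.length - 1 - (K - 1) with hjdef
  have hj : j < l.length := by omega
  have hjK : j = l.length - K := by omega
  have hval : kthLargest M K = l[j] := by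
    rw [kthLargest, ← hldef, List.getD_eq_getElem _ _ hidx, List.getElem_reverse]
  have hcount : Multiset.card (M.filter (m ≤ ·)) = l.countP (fun x => decide (m ≤ x)) := by
    conv_lhs => rw [← M.sort_eq (· ≤ ·), ← hldef]
    simp [Multiset.filter_coe, List.countP_eq_length_filter]
  rw [hval, hcount]
  constructor
  · intro hm
    have hsplit := List.countP_append (p := fun x => decide (m ≤ x)) (l₁ := l.take j) (l₂ := l.drop j)
    rw [List.take_append_drop] at hsplit
    have hdlen : (l.drop j).length = K := by rw [List.length_drop]; omega
    have hdrop : (l.drop j).countP (fun x => decide (m ≤ x)) = K := by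
      rw [← hdlen]
      rw [List.countP_eq_length]
      intro a ha
      obtain ⟨k, hk, rfl⟩ := List.mem_iff_getElem.mp ha
      rw [List.getElem_drop]
      have : l[j] ≤ l[j + k] := by
        have := hsort.rel_get_of_le (a := ⟨j, hj⟩)
          (b := ⟨j + k, by have := hk; rw [List.length_drop] at this; omega⟩)
          (by simp)
        simpa using this
      simpa using le_trans hm this
    omega
  · intro hcnt
    by_contra hm
    push_neg at hm
    have hsplit := List.countP_append (p := fun x => decide (m ≤ x)) (l₁ := l.take (j+1)) (l₂ := l.drop (j+1))
    rw [List.take_append_drop] at hsplit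
    have htake : (l.take (j+1)).countP (fun x => decide (m ≤ x)) = 0 := by
      rw [List.countP_eq_zero]
      intro a ha
      obtain ⟨k, hk, rfl⟩ := List.mem_iff_getElem.mp ha
      rw [List.getElem_take]
      have hkj : k ≤ j := by rw [List.length_take] at hk; omega
      have : l[k]'(by omega) ≤ l[j] := by
        have := hsort.rel_get_of_le (a := ⟨k, by omega⟩) (b := ⟨j, hj⟩) (by simpa using hkj)
        simpa using this
      simp only [decide_eq_true_eq]
      omega
    have hdlen : (l.drop (j+1)).length = K - 1 := by rw [List.length_drop]; omega
    have := (l.drop (j+1)).countP_le_length (p := fun x => decide (m ≤ x))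
    omega


lemma kthLargest_recover (M : Multiset ℕ) :
    ((Finset.univ : Finset (Fin (Multiset.card M))).val).map
      (fun i => kthLargest M (i.val + 1)) = M := by
  classical
  set l := M.sort (· ≤ ·) with hldef
  have hlen : l.length = Multiset.card M := M.length_sort _
  have hrl : l.reverse.length = Multiset.card M := by rw [List.length_reverse]; exact hlen
  rw [Fin.univ_val_map]
  have h1 : (List.ofFn (fun i : Fin (Multiset.card M) => kthLargest M (i.val + 1)))
      = l.reverse := by
    conv_rhs => rw [← List.ofFn_getElem (xs := l.reverse)]
    rw [List.ofFn_congr hrl.symm]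
    apply congrArg
    funext i
    rw [kthLargest, ← hldef, Nat.add_sub_cancel, List.getD_eq_getElem _ _ (by simp; omega)]
    rfl
  rw [h1]
  have : (l.reverse : Multiset ℕ) = (l : Multiset ℕ) := by
    exact Quot.sound (List.reverse_perm l)
  rw [this, hldef, Multiset.sort_eq]

lemma card_val_lt {N A : ℕ} (hA : A ≤ N) :
    (Finset.univ.filter (fun i : Fin N => i.val < A)).card = A := by
  rcases eq_or_lt_of_le hA with rfl | h
  · rw [Finset.filter_true_of_mem (fun i _ => i.isLt), Finset.card_univ, Fintype.card_fin]
  · have : (Finset.univ.filter (fun i : Fin N => i.val < A)) = Finset.Iio ⟨A, h⟩ := by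
      ext i
      simp [Fin.lt_def]
    rw [this, Fin.card_Iio]

/-- multiset of g-values over Fin L -/
def valMS (L : ℕ) (g : ℕ → ℕ) : Multiset ℕ :=
  ((Finset.univ : Finset (Fin L)).val).map (fun i => g (i.val + 1))

lemma valMS_card (L : ℕ) (g : ℕ → ℕ) : Multiset.card (valMS L g) = L := by
  simp [valMS]

lemma valMS_filter_card (L : ℕ) (g : ℕ → ℕ) (m : ℕ) :
    Multiset.card ((valMS L g).filter (m ≤ ·)) =
      (Finset.univ.filter (fun i : Fin L => m ≤ g (i.val + 1))).card := by
  rw [valMS, Multiset.filter_map, Multiset.card_map]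
  rw [Finset.filter]
  simp only [Finset.card_mk]
  congr 1

lemma count_le_of_le {L : ℕ} {g : ℕ → ℕ} (hanti : ∀ i j, 1 ≤ i → i ≤ j → j ≤ L → g j ≤ g i)
    {A m : ℕ} (hA1 : 1 ≤ A) (hA : A ≤ L) (hm : m ≤ g A) :
    A ≤ Multiset.card ((valMS L g).filter (m ≤ ·)) := by
  rw [valMS_filter_card]
  calc A = (Finset.univ.filter (fun i : Fin L => i.val < A)).card := (card_val_lt hA).symm
    _ ≤ _ := by
      apply Finset.card_le_card
      intro i hi
      simp only [Finset.mem_filter, Finset.mem_univ, true_and] at hi ⊢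
      exact le_trans hm (hanti (i.val+1) A (by omega) (by omega) hA)

lemma le_of_count_le {L : ℕ} {g : ℕ → ℕ} (hanti : ∀ i j, 1 ≤ i → i ≤ j → j ≤ L → g j ≤ g i)
    {A m : ℕ} (hA1 : 1 ≤ A) (hA : A ≤ L)
    (hcnt : A ≤ Multiset.card ((valMS L g).filter (m ≤ ·))) : m ≤ g A := by
  by_contra hm
  push_neg at hm
  rw [valMS_filter_card] at hcnt
  have hsub : (Finset.univ.filter (fun i : Fin L => m ≤ g (i.val + 1))) ⊆
      (Finset.univ.filter (fun i : Fin L => i.val < A - 1)) := by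
    intro i hi
    simp only [Finset.mem_filter, Finset.mem_univ, true_and] at hi ⊢
    by_contra hge
    push_neg at hge
    have : g (i.val + 1) ≤ g A := hanti A (i.val+1) hA1 (by omega) (by omega)
    omega
  have := Finset.card_le_card hsub
  rw [card_val_lt (by omega)] at this
  omega

lemma kthLargest_valMS {L : ℕ} {g : ℕ → ℕ} (hanti : ∀ i j, 1 ≤ i → i ≤ j → j ≤ L → g j ≤ g i)
    {K : ℕ} (hK1 : 1 ≤ K) (hK : K ≤ L) : kthLargest (valMS L g) K = g K := by
  have hcard : K ≤ Multiset.card (valMS L g) := by rw [valMS_card]; exact hK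
  apply le_antisymm
  · exact le_of_count_le hanti hK1 hK
      ((kthLargest_char hK1 hcard).mp (le_refl _))
  · exact (kthLargest_char hK1 hcard).mpr (count_le_of_le hanti hK1 hK (le_refl _))

section Ham
variable {ι ι' : Type*} [Fintype ι] [Fintype ι']

lemma hammingNorm_eq_sum (v : ι → F2) :
    hammingNorm v = ∑ i, if v i ≠ 0 then 1 else 0 := by
  rw [hammingNorm, Finset.card_filter]

lemma hammingNorm_comp_equiv (e : ι' ≃ ι) (v : ι → F2) :
    hammingNorm (v ∘ e) = hammingNorm v := by
  rw [hammingNorm_eq_sum, hammingNorm_eq_sum]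
  exact Equiv.sum_comp e (fun i => if v i ≠ 0 then 1 else 0)

lemma hammingNorm_add_le (x y : ι → F2) :
    hammingNorm (x + y) ≤ hammingNorm x + hammingNorm y := by
  have h := hammingDist_triangle (x + y) x 0
  rw [hammingDist_zero_right, hammingDist_zero_right, hammingDist_eq_hammingNorm] at h
  have hy : -y = y := funext fun i => ZMod.neg_eq_self_mod_two (y i)
  simpa [add_sub_cancel_left, add_comm, hy] using h

end Ham

-- vecMul structure for kron T2 G
section Kron
variable {N : ℕ} (G : Matrix (Fin N) (Fin N) F2)

def e2 (N : ℕ) : Fin 2 × Fin N ≃ Fin (2 * N) := finProdFinEquiv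

lemma e2_symm_apply (i : Fin (2 * N)) : (e2 N).symm i = (i.divNat, i.modNat) := rfl

lemma divNat_e2 (a : Fin 2) (b : Fin N) : ((e2 N) (a, b)).divNat = a := by
  have : (e2 N).symm ((e2 N) (a, b)) = (a, b) := (e2 N).symm_apply_apply _
  rw [e2_symm_apply] at this
  exact congrArg Prod.fst this

lemma modNat_e2 (a : Fin 2) (b : Fin N) : ((e2 N) (a, b)).modNat = b := by
  have : (e2 N).symm ((e2 N) (a, b)) = (a, b) := (e2 N).symm_apply_apply _
  rw [e2_symm_apply] at this
  exact congrArg Prod.snd this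

lemma kron_apply_e2 (a c : Fin 2) (b d : Fin N) :
    kron T2 G ((e2 N) (a, b)) ((e2 N) (c, d)) = T2 a c * G b d := by
  rw [kron, divNat_e2, modNat_e2, divNat_e2, modNat_e2]

lemma T2_00 : T2 0 0 = 1 := rfl
lemma T2_01 : T2 0 1 = 0 := rfl
lemma T2_10 : T2 1 0 = 1 := rfl
lemma T2_11 : T2 1 1 = 1 := rfl

/-- first and second halves of a vector on `Fin (2*N)` -/
def half0 (u : Fin (2 * N) → F2) : Fin N → F2 := fun b => u ((e2 N) (0, b))
def half1 (u : Fin (2 * N) → F2) : Fin N → F2 := fun b => u ((e2 N) (1, b))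

lemma vecMul_kron0 (u : Fin (2 * N) → F2) (d : Fin N) :
    Matrix.vecMul u (kron T2 G) ((e2 N) (0, d)) =
      Matrix.vecMul (half0 u + half1 u) G d := by
  show (u ⬝ᵥ fun i => kron T2 G i ((e2 N) (0, d))) = _
  rw [dotProduct]
  rw [← Equiv.sum_comp (e2 N) (fun i => u i * kron T2 G i ((e2 N) (0, d)))]
  rw [Fintype.sum_prod_type]
  rw [Fin.sum_univ_two]
  show (∑ b, u ((e2 N) (0, b)) * kron T2 G ((e2 N) (0, b)) ((e2 N) (0, d)))
      + (∑ b, u ((e2 N) (1, b)) * kron T2 G ((e2 N) (1, b)) ((e2 N) (0, d))) = _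
  simp only [kron_apply_e2, T2_00, T2_10, one_mul]
  rw [Matrix.vecMul, dotProduct, ← Finset.sum_add_distrib]
  congr 1
  funext b
  show u ((e2 N) (0, b)) * G b d + u ((e2 N) (1, b)) * G b d =
    (half0 u + half1 u) b * G b d
  rw [Pi.add_apply, add_mul]
  rfl

lemma vecMul_kron1 (u : Fin (2 * N) → F2) (d : Fin N) :
    Matrix.vecMul u (kron T2 G) ((e2 N) (1, d)) =
      Matrix.vecMul (half1 u) G d := by
  show (u ⬝ᵥ fun i => kron T2 G i ((e2 N) (1, d))) = _
  rw [dotProduct]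
  rw [← Equiv.sum_comp (e2 N) (fun i => u i * kron T2 G i ((e2 N) (1, d)))]
  rw [Fintype.sum_prod_type]
  rw [Fin.sum_univ_two]
  show (∑ b, u ((e2 N) (0, b)) * kron T2 G ((e2 N) (0, b)) ((e2 N) (1, d)))
      + (∑ b, u ((e2 N) (1, b)) * kron T2 G ((e2 N) (1, b)) ((e2 N) (1, d))) = _
  simp only [kron_apply_e2, T2_01, T2_11, one_mul, zero_mul, mul_zero]
  rw [Matrix.vecMul, dotProduct]
  simp [half1]

lemma hammingNorm_halves (v : Fin (2 * N) → F2) :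
    hammingNorm v = hammingNorm (half0 v) + hammingNorm (half1 v) := by
  rw [← hammingNorm_comp_equiv (e2 N) v]
  rw [hammingNorm_eq_sum, Fintype.sum_prod_type, Fin.sum_univ_two]
  rw [hammingNorm_eq_sum, hammingNorm_eq_sum]
  rfl

lemma weight_decomp (u : Fin (2 * N) → F2) :
    hammingNorm (Matrix.vecMul u (kron T2 G)) =
      hammingNorm (Matrix.vecMul (half0 u + half1 u) G)
        + hammingNorm (Matrix.vecMul (half1 u) G) := by
  rw [hammingNorm_halves]
  congr 1
  · apply congrArg; funext d; exact vecMul_kron0 G u d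
  · apply congrArg; funext d; exact vecMul_kron1 G u d

lemma halves_zero {u : Fin (2 * N) → F2} (h0 : half0 u = 0) (h1 : half1 u = 0) : u = 0 := by
  funext i
  obtain ⟨⟨a, b⟩, rfl⟩ := (e2 N).surjective i
  fin_cases a
  · exact congrFun h0 b
  · exact congrFun h1 b

end Kron

section CoreLemma
variable {N : ℕ} (G : Matrix (Fin N) (Fin N) F2)

def emb0 : Fin N ↪ Fin (2 * N) :=
  ⟨fun b => (e2 N) (0, b), fun b b' h => by
    have := (e2 N).injective h; exact (Prod.ext_iff.mp this).2⟩
def emb1 : Fin N ↪ Fin (2 * N) :=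
  ⟨fun b => (e2 N) (1, b), fun b b' h => by
    have := (e2 N).injective h; exact (Prod.ext_iff.mp this).2⟩

def lift0 (u0 : Fin N → F2) : Fin (2 * N) → F2 :=
  fun i => if ((e2 N).symm i).1 = 0 then u0 ((e2 N).symm i).2 else 0
def lift1 (u1 : Fin N → F2) : Fin (2 * N) → F2 :=
  fun i => if ((e2 N).symm i).1 = 1 then u1 ((e2 N).symm i).2 else 0

lemma half0_lift0 (u0 : Fin N → F2) : half0 (lift0 u0) = u0 := by
  funext b; simp [half0, lift0, Equiv.symm_apply_apply]
lemma half1_lift0 (u0 : Fin N → F2) : half1 (lift0 u0) = 0 := by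
  funext b; simp [half1, lift0, Equiv.symm_apply_apply]
lemma half0_lift1 (u1 : Fin N → F2) : half0 (lift1 u1) = 0 := by
  funext b; simp [half0, lift1, Equiv.symm_apply_apply]
lemma half1_lift1 (u1 : Fin N → F2) : half1 (lift1 u1) = u1 := by
  funext b; simp [half1, lift1, Equiv.symm_apply_apply]

lemma lift0_supp {u0 : Fin N → F2} {i : Fin (2 * N)} (h : lift0 u0 i ≠ 0) :
    ∃ b, i = (e2 N) (0, b) ∧ u0 b ≠ 0 := by
  by_cases hc : ((e2 N).symm i).1 = 0
  · refine ⟨((e2 N).symm i).2, ?_, ?_⟩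
    · conv_lhs => rw [← (e2 N).apply_symm_apply i]
      congr 1
      exact (Prod.ext_iff.mpr ⟨hc, rfl⟩)
    · intro h0; apply h; rw [lift0, if_pos hc, h0]
  · exfalso; apply h; rw [lift0, if_neg hc]

lemma lift1_supp {u1 : Fin N → F2} {i : Fin (2 * N)} (h : lift1 u1 i ≠ 0) :
    ∃ b, i = (e2 N) (1, b) ∧ u1 b ≠ 0 := by
  by_cases hc : ((e2 N).symm i).1 = 1
  · refine ⟨((e2 N).symm i).2, ?_, ?_⟩
    · conv_lhs => rw [← (e2 N).apply_symm_apply i]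
      congr 1
      exact (Prod.ext_iff.mpr ⟨hc, rfl⟩)
    · intro h0; apply h; rw [lift1, if_pos hc, h0]
  · exfalso; apply h; rw [lift1, if_neg hc]

lemma fin2_cases (a : Fin 2) : a = 0 ∨ a = 1 := by omega

/-- the target multiset -/
def mergeMS (G : Matrix (Fin N) (Fin N) F2) : Multiset ℕ :=
  valMS N (fun k => 2 * spec G k) + valMS N (spec G)

lemma mergeMS_card : Multiset.card (mergeMS G) = 2 * N := by
  rw [mergeMS, Multiset.card_add, valMS_card, valMS_card]; omega

lemma spec_anti' : ∀ i j : ℕ, 1 ≤ i → i ≤ j → j ≤ N → spec G j ≤ spec G i :=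
  fun _ _ h1 h2 h3 => spec_anti G h1 h2 h3

lemma spec2_anti : ∀ i j, 1 ≤ i → i ≤ j → j ≤ N →
    (fun k => 2 * spec G k) j ≤ (fun k => 2 * spec G k) i := by
  intro i j h1 h2 h3
  simpa using Nat.mul_le_mul_left 2 (spec_anti G h1 h2 h3)

lemma spec_kron_le {K : ℕ} (hK1 : 1 ≤ K) (hK2 : K ≤ 2 * N) :
    spec (kron T2 G) K ≤ kthLargest (mergeMS G) K := by
  obtain ⟨I, hIcard, hIval⟩ := spec_exists (kron T2 G) hK2 hK1
  rw [← hIval]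
  set t := minDist (kron T2 G) I with htdef
  have hcard : K ≤ Multiset.card (mergeMS G) := by rw [mergeMS_card]; omega
  rw [kthLargest_char hK1 hcard]
  classical
  set I0 : Finset (Fin N) := Finset.univ.filter (fun b => (e2 N) (0, b) ∈ I) with hI0
  set I1 : Finset (Fin N) := Finset.univ.filter (fun b => (e2 N) (1, b) ∈ I) with hI1
  -- cardinality split
  have hsplit : I0.card + I1.card = K := by
    set J : Finset (Fin 2 × Fin N) := I.map (e2 N).symm.toEmbedding with hJ
    have hJcard : J.card = K := by rw [hJ, Finset.card_map, hIcard]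
    have hmemJ : ∀ x : Fin 2 × Fin N, x ∈ J ↔ (e2 N) x ∈ I := by
      intro x
      rw [hJ, Finset.mem_map_equiv]
      simp
    have h0 : (J.filter (fun x => x.1 = 0)).card = I0.card := by
      apply Finset.card_nbij' (i := fun x => x.2) (j := fun b => (0, b))
      · intro x hx
        rw [Finset.mem_coe, Finset.mem_filter] at hx
        simp only [hI0, Finset.mem_coe, Finset.mem_filter]
        refine ⟨Finset.mem_univ _, ?_⟩
        have : ((0 : Fin 2), x.2) = x := by
          apply Prod.ext_iff.mpr; exact ⟨hx.2.symm, rfl⟩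
        rw [this]; exact (hmemJ x).mp hx.1
      · intro b hb
        simp only [hI0, Finset.mem_coe, Finset.mem_filter] at hb
        rw [Finset.mem_coe, Finset.mem_filter]
        exact ⟨(hmemJ _).mpr hb.2, rfl⟩
      · intro x hx
        rw [Finset.mem_coe, Finset.mem_filter] at hx
        apply Prod.ext_iff.mpr; exact ⟨hx.2.symm, rfl⟩
      · intro b hb; rfl
    have h1 : (J.filter (fun x => ¬(x.1 = 0))).card = I1.card := by
      apply Finset.card_nbij' (i := fun x => x.2) (j := fun b => (1, b))
      · intro x hx
        rw [Finset.mem_coe, Finset.mem_filter] at hx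
        simp only [hI1, Finset.mem_coe, Finset.mem_filter]
        refine ⟨Finset.mem_univ _, ?_⟩
        have hx1 : x.1 = 1 := by rcases fin2_cases x.1 with h | h; exact absurd h hx.2; exact h
        have : ((1 : Fin 2), x.2) = x := by
          apply Prod.ext_iff.mpr; exact ⟨hx1.symm, rfl⟩
        rw [this]; exact (hmemJ x).mp hx.1
      · intro b hb
        simp only [hI1, Finset.mem_coe, Finset.mem_filter] at hb
        rw [Finset.mem_coe, Finset.mem_filter]
        refine ⟨(hmemJ _).mpr hb.2, ?_⟩
        show ¬(1 : Fin 2) = 0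
        decide
      · intro x hx
        rw [Finset.mem_coe, Finset.mem_filter] at hx
        have hx1 : x.1 = 1 := by rcases fin2_cases x.1 with h | h; exact absurd h hx.2; exact h
        apply Prod.ext_iff.mpr; exact ⟨hx1.symm, rfl⟩
      · intro b hb; rfl
    have := Finset.card_filter_add_card_filter_not (s := J) (p := fun x => x.1 = 0)
    omega
  have hI0N : I0.card ≤ N := by
    calc I0.card ≤ (Finset.univ : Finset (Fin N)).card := Finset.card_le_univ _
      _ = N := Finset.card_fin N
  have hI1N : I1.card ≤ N := by
    calc I1.card ≤ (Finset.univ : Finset (Fin N)).card := Finset.card_le_univ _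
      _ = N := Finset.card_fin N
  -- bounds
  have hB : 1 ≤ I0.card → t ≤ spec G I0.card := by
    intro hpos
    have hne : I0.Nonempty := Finset.card_pos.mp hpos
    obtain ⟨u0, hu0, hs0, hw0⟩ := minDist_exists G hne
    have hlne : lift0 u0 ≠ 0 := by
      intro h
      apply hu0
      rw [← half0_lift0 u0, h]
      rfl
    have hsupp : ∀ i, lift0 u0 i ≠ 0 → i ∈ I := by
      intro i hi
      obtain ⟨b, rfl, hb⟩ := lift0_supp hi
      have := hs0 b hb
      rw [hI0, Finset.mem_filter] at this
      exact this.2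
    have h1 : t ≤ hammingNorm (Matrix.vecMul (lift0 u0) (kron T2 G)) :=
      minDist_le (kron T2 G) hlne hsupp
    rw [weight_decomp, half0_lift0, half1_lift0, add_zero, Matrix.zero_vecMul] at h1
    simp only [hammingNorm_zero, add_zero] at h1
    calc t ≤ hammingNorm (Matrix.vecMul u0 G) := h1
      _ = minDist G I0 := hw0
      _ ≤ spec G I0.card := minDist_le_spec G hpos
  have hA : 1 ≤ I1.card → t ≤ 2 * spec G I1.card := by
    intro hpos
    have hne : I1.Nonempty := Finset.card_pos.mp hpos
    obtain ⟨u1, hu1, hs1, hw1⟩ := minDist_exists G hne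
    have hlne : lift1 u1 ≠ 0 := by
      intro h
      apply hu1
      rw [← half1_lift1 u1, h]
      rfl
    have hsupp : ∀ i, lift1 u1 i ≠ 0 → i ∈ I := by
      intro i hi
      obtain ⟨b, rfl, hb⟩ := lift1_supp hi
      have := hs1 b hb
      rw [hI1, Finset.mem_filter] at this
      exact this.2
    have h1 : t ≤ hammingNorm (Matrix.vecMul (lift1 u1) (kron T2 G)) :=
      minDist_le (kron T2 G) hlne hsupp
    rw [weight_decomp, half0_lift1, half1_lift1, zero_add] at h1
    calc t ≤ hammingNorm (Matrix.vecMul u1 G) + hammingNorm (Matrix.vecMul u1 G) := h1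
      _ = 2 * hammingNorm (Matrix.vecMul u1 G) := by omega
      _ = 2 * minDist G I1 := by rw [hw1]
      _ ≤ 2 * spec G I1.card := Nat.mul_le_mul_left 2 (minDist_le_spec G hpos)
  -- count
  rw [mergeMS, Multiset.filter_add, Multiset.card_add]
  have hcnt1 : I1.card ≤ Multiset.card ((valMS N (fun k => 2 * spec G k)).filter (t ≤ ·)) := by
    rcases Nat.eq_zero_or_pos I1.card with h | h
    · omega
    · exact count_le_of_le (spec2_anti G) h hI1N (hA h)
  have hcnt0 : I0.card ≤ Multiset.card ((valMS N (spec G)).filter (t ≤ ·)) := by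
    rcases Nat.eq_zero_or_pos I0.card with h | h
    · omega
    · exact count_le_of_le (spec_anti' G) h hI0N (hB h)
  omega

lemma spec_exists' {K : ℕ} (hK : K ≤ N) :
    ∃ I : Finset (Fin N), I.card = K ∧ (1 ≤ K → minDist G I = spec G K) := by
  rcases Nat.eq_zero_or_pos K with rfl | h
  · exact ⟨∅, Finset.card_empty, by omega⟩
  · obtain ⟨I, h1, h2⟩ := spec_exists G hK h
    exact ⟨I, h1, fun _ => h2⟩

lemma le_spec_kron {K : ℕ} (hK1 : 1 ≤ K) (hK2 : K ≤ 2 * N) :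
    kthLargest (mergeMS G) K ≤ spec (kron T2 G) K := by
  classical
  set t := kthLargest (mergeMS G) K with htdef
  have hcard : K ≤ Multiset.card (mergeMS G) := by rw [mergeMS_card]; omega
  have hchar : K ≤ Multiset.card ((mergeMS G).filter (t ≤ ·)) :=
    (kthLargest_char hK1 hcard).mp (le_refl t)
  rw [mergeMS, Multiset.filter_add, Multiset.card_add] at hchar
  set A' := Multiset.card ((valMS N (fun k => 2 * spec G k)).filter (t ≤ ·)) with hA'
  set B' := Multiset.card ((valMS N (spec G)).filter (t ≤ ·)) with hB'
  have hA'N : A' ≤ N := by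
    rw [hA']
    calc Multiset.card ((valMS N (fun k => 2 * spec G k)).filter (t ≤ ·))
        ≤ Multiset.card (valMS N (fun k => 2 * spec G k)) :=
          Multiset.card_le_card (Multiset.filter_le _ _)
      _ = N := valMS_card _ _
  have hB'N : B' ≤ N := by
    rw [hB']
    calc Multiset.card ((valMS N (spec G)).filter (t ≤ ·))
        ≤ Multiset.card (valMS N (spec G)) := Multiset.card_le_card (Multiset.filter_le _ _)
      _ = N := valMS_card _ _
  set A := min A' K with hAdef
  set B := K - A with hBdef
  have hBB' : B ≤ B' := by omega
  have hAN : A ≤ N := by omega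
  have hBN : B ≤ N := by omega
  have htA : 1 ≤ A → t ≤ 2 * spec G A := by
    intro h
    exact le_of_count_le (spec2_anti G) h hAN (by omega)
  have htB : 1 ≤ B → t ≤ spec G B := by
    intro h
    exact le_of_count_le (spec_anti' G) h hBN (by omega)
  obtain ⟨I0, hI0card, hI0val⟩ := spec_exists' G hBN
  obtain ⟨I1, hI1card, hI1val⟩ := spec_exists' G hAN
  set I : Finset (Fin (2 * N)) := I0.map emb0 ∪ I1.map emb1 with hIdef
  have hdisj : Disjoint (I0.map emb0) (I1.map emb1) := by
    rw [Finset.disjoint_left]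
    intro x hx0 hx1
    rw [Finset.mem_map] at hx0 hx1
    obtain ⟨b, _, hb⟩ := hx0
    obtain ⟨b', _, hb'⟩ := hx1
    rw [← hb'] at hb
    have := (e2 N).injective hb
    have hq : (0 : Fin 2) = 1 := (Prod.ext_iff.mp this).1
    exact absurd hq (by decide)
  have hIcard : I.card = K := by
    rw [hIdef, Finset.card_union_of_disjoint hdisj, Finset.card_map, Finset.card_map,
      hI0card, hI1card]
    omega
  have hmem0 : ∀ b, (e2 N) (0, b) ∈ I → b ∈ I0 := by
    intro b hb
    rw [hIdef, Finset.mem_union] at hb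
    rcases hb with hb | hb
    · rw [Finset.mem_map] at hb
      obtain ⟨b', hb', heq⟩ := hb
      have := (e2 N).injective heq
      have h2 : b' = b := (Prod.ext_iff.mp this).2
      rwa [← h2]
    · rw [Finset.mem_map] at hb
      obtain ⟨b', _, heq⟩ := hb
      have := (e2 N).injective heq
      have hq : (1 : Fin 2) = 0 := (Prod.ext_iff.mp this).1
      exact absurd hq (by decide)
  have hmem1 : ∀ b, (e2 N) (1, b) ∈ I → b ∈ I1 := by
    intro b hb
    rw [hIdef, Finset.mem_union] at hb
    rcases hb with hb | hb
    · rw [Finset.mem_map] at hb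
      obtain ⟨b', _, heq⟩ := hb
      have := (e2 N).injective heq
      have hq : (0 : Fin 2) = 1 := (Prod.ext_iff.mp this).1
      exact absurd hq (by decide)
    · rw [Finset.mem_map] at hb
      obtain ⟨b', hb', heq⟩ := hb
      have := (e2 N).injective heq
      have h2 : b' = b := (Prod.ext_iff.mp this).2
      rwa [← h2]
  have hfinal : t ≤ minDist (kron T2 G) I := by
    apply le_minDist (kron T2 G) (Finset.card_pos.mp (by omega))
    intro u hu hsupp
    set u0 := half0 u with hu0def
    set u1 := half1 u with hu1def
    have hs0 : ∀ b, u0 b ≠ 0 → b ∈ I0 := fun b hb => hmem0 b (hsupp _ hb)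
    have hs1 : ∀ b, u1 b ≠ 0 → b ∈ I1 := fun b hb => hmem1 b (hsupp _ hb)
    rw [weight_decomp]
    by_cases h1 : u1 = 0
    · have h0 : u0 ≠ 0 := by
        intro h
        exact hu (halves_zero h h1)
      obtain ⟨b, hb⟩ := Function.ne_iff.mp h0
      have hBpos : 1 ≤ B := by
        rw [hBdef] at *
        have : I0.Nonempty := ⟨b, hs0 b hb⟩
        have := Finset.card_pos.mpr this
        omega
      rw [← hu0def, ← hu1def, h1, add_zero, Matrix.zero_vecMul]
      simp only [hammingNorm_zero, add_zero]
      calc t ≤ spec G B := htB hBpos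
        _ = minDist G I0 := (hI0val (by omega)).symm
        _ ≤ hammingNorm (Matrix.vecMul u0 G) := minDist_le G h0 hs0
    · have hApos : 1 ≤ A := by
        obtain ⟨b, hb⟩ := Function.ne_iff.mp h1
        have : I1.Nonempty := ⟨b, hs1 b hb⟩
        have := Finset.card_pos.mpr this
        omega
      by_cases h0 : u0 = 0
      · rw [← hu0def, ← hu1def, h0, zero_add]
        calc t ≤ 2 * spec G A := htA hApos
          _ = 2 * minDist G I1 := by rw [hI1val (by omega)]
          _ ≤ 2 * hammingNorm (Matrix.vecMul u1 G) :=
              Nat.mul_le_mul_left 2 (minDist_le G h1 hs1)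
          _ = hammingNorm (Matrix.vecMul u1 G) + hammingNorm (Matrix.vecMul u1 G) := by omega
      · -- both nonzero
        obtain ⟨b, hb⟩ := Function.ne_iff.mp h0
        have hBpos : 1 ≤ B := by
          have : I0.Nonempty := ⟨b, hs0 b hb⟩
          have := Finset.card_pos.mpr this
          omega
        have key : hammingNorm (Matrix.vecMul u0 G) ≤
            hammingNorm (Matrix.vecMul (u0 + u1) G) + hammingNorm (Matrix.vecMul u1 G) := by
          have hchar2 : ∀ x y : F2, x = x + y + y := by decide
          have hveq : Matrix.vecMul u0 G =
              Matrix.vecMul (u0 + u1) G + Matrix.vecMul u1 G := by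
            rw [← Matrix.add_vecMul]
            have huu : u0 = u0 + u1 + u1 := funext fun b' => hchar2 (u0 b') (u1 b')
            rw [← huu]
          rw [hveq]
          exact hammingNorm_add_le _ _
        calc t ≤ spec G B := htB hBpos
          _ = minDist G I0 := (hI0val (by omega)).symm
          _ ≤ hammingNorm (Matrix.vecMul u0 G) := minDist_le G h0 hs0
          _ ≤ _ := key
  calc t ≤ minDist (kron T2 G) I := hfinal
    _ ≤ spec (kron T2 G) I.card := minDist_le_spec (kron T2 G) (by omega)
    _ = spec (kron T2 G) K := by rw [hIcard]

lemma spec_kron_T2 {K : ℕ} (hK1 : 1 ≤ K) (hK2 : K ≤ 2 * N) :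
    spec (kron T2 G) K = kthLargest (mergeMS G) K :=
  le_antisymm (spec_kron_le G hK1 hK2) (le_spec_kron G hK1 hK2)

end CoreLemma
section Reindex
variable {N N' : ℕ}

lemma vecMul_reindex (e f : Fin N' ≃ Fin N) (G : Matrix (Fin N) (Fin N) F2)
    (u' : Fin N' → F2) (j : Fin N') :
    Matrix.vecMul u' (fun i j => G (e i) (f j)) j = Matrix.vecMul (u' ∘ e.symm) G (f j) := by
  show (u' ⬝ᵥ fun i => G (e i) (f j)) = ((u' ∘ e.symm) ⬝ᵥ fun i => G i (f j))
  rw [dotProduct, dotProduct,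
    ← Equiv.sum_comp e (fun i => (u' ∘ e.symm) i * G i (f j))]
  apply Finset.sum_congr rfl
  intro i' _
  simp [Equiv.symm_apply_apply]

lemma map_map_symm (e : Fin N' ≃ Fin N) (I : Finset (Fin N)) :
    (I.map e.symm.toEmbedding).map e.toEmbedding = I := by
  ext x
  simp [Finset.mem_map_equiv]

lemma minDist_reindex (e f : Fin N' ≃ Fin N) (G : Matrix (Fin N) (Fin N) F2)
    (I' : Finset (Fin N')) :
    minDist (fun i j => G (e i) (f j)) I' = minDist G (I'.map e.toEmbedding) := by
  unfold minDist
  congr 1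
  ext w
  constructor
  · rintro ⟨u', hne, hsupp, rfl⟩
    refine ⟨u' ∘ e.symm, ?_, ?_, ?_⟩
    · intro h
      apply hne
      funext i'
      have := congrFun h (e i')
      simpa using this
    · intro i hi
      rw [Finset.mem_map_equiv]
      exact hsupp _ hi
    · have hv : Matrix.vecMul u' (fun i j => G (e i) (f j))
          = (Matrix.vecMul (u' ∘ e.symm) G) ∘ f := by
        funext j
        exact vecMul_reindex e f G u' j
      rw [hv, hammingNorm_comp_equiv]
  · rintro ⟨u, hne, hsupp, rfl⟩
    refine ⟨u ∘ e, ?_, ?_, ?_⟩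
    · intro h
      apply hne
      funext i
      have := congrFun h (e.symm i)
      simpa using this
    · intro i' hi'
      have := hsupp (e i') hi'
      rw [Finset.mem_map_equiv] at this
      simpa using this
    · have hcomp : (u ∘ e) ∘ e.symm = u := by
        funext i
        simp
      have hv : Matrix.vecMul (u ∘ e) (fun i j => G (e i) (f j))
          = (Matrix.vecMul u G) ∘ f := by
        funext j
        rw [vecMul_reindex e f G (u ∘ e) j, hcomp]
        rfl
      rw [hv, hammingNorm_comp_equiv]

lemma spec_congr (e f : Fin N' ≃ Fin N) (G : Matrix (Fin N) (Fin N) F2) (K : ℕ) :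
    spec (fun i j => G (e i) (f j)) K = spec G K := by
  unfold spec
  congr 1
  ext d
  constructor
  · rintro ⟨I', hc, rfl⟩
    exact ⟨I'.map e.toEmbedding, by rw [Finset.card_map, hc],
      (minDist_reindex e f G I').symm⟩
  · rintro ⟨I, hc, rfl⟩
    refine ⟨I.map e.symm.toEmbedding, by rw [Finset.card_map, hc], ?_⟩
    rw [minDist_reindex e f G, map_map_symm]

end Reindex

section Entries

lemma T2pow_succ_apply (n : ℕ) (x y : Fin (2 ^ (n + 1))) :
    T2pow (n + 1) x y = kron T2 (T2pow n)
      (Fin.cast (by rw [pow_succ, Nat.mul_comm]) x)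
      (Fin.cast (by rw [pow_succ, Nat.mul_comm]) y) := rfl

lemma kron_one_eq (p : ℕ) (Tp : Matrix (Fin p) (Fin p) F2) :
    kron (T2pow 0) Tp = fun i j => Tp (Fin.cast (one_mul p) i) (Fin.cast (one_mul p) j) := by
  funext i j
  show (T2pow 0) i.divNat j.divNat * Tp i.modNat j.modNat = _
  have h1 : (T2pow 0) i.divNat j.divNat = 1 := by
    have : i.divNat = j.divNat := by
      apply Fin.ext
      omega
    rw [this]
    show (1 : Matrix (Fin (2^0)) (Fin (2^0)) F2) j.divNat j.divNat = 1
    exact Matrix.one_apply_eq _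
  rw [h1, one_mul]
  have hm : ∀ k : Fin (1 * p), k.modNat = Fin.cast (one_mul p) k := by
    intro k
    apply Fin.ext
    rw [Fin.coe_modNat]
    exact Nat.mod_eq_of_lt (by have := k.isLt; omega)
  rw [hm i, hm j]

lemma kron_succ_eq (n p : ℕ) (Tp : Matrix (Fin p) (Fin p) F2) :
    kron (T2pow (n + 1)) Tp = fun i j => kron T2 (kron (T2pow n) Tp)
      (Fin.cast (by rw [pow_succ]; ring) i) (Fin.cast (by rw [pow_succ]; ring) j) := by
  have hh : 2 ^ (n + 1) * p = 2 * (2 ^ n * p) := by rw [pow_succ]; ring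
  funext i j
  show (T2pow (n+1)) i.divNat j.divNat * Tp i.modNat j.modNat = _
  rw [T2pow_succ_apply]
  show T2 (Fin.cast _ i.divNat).divNat (Fin.cast _ j.divNat).divNat
      * (T2pow n) (Fin.cast _ i.divNat).modNat (Fin.cast _ j.divNat).modNat
      * Tp i.modNat j.modNat
    = T2 (Fin.cast hh i).divNat (Fin.cast hh j).divNat
      * ((T2pow n) (Fin.cast hh i).modNat.divNat (Fin.cast hh j).modNat.divNat
          * Tp (Fin.cast hh i).modNat.modNat (Fin.cast hh j).modNat.modNat)
  have hA : ∀ k : Fin (2 ^ (n + 1) * p),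
      (Fin.cast (by rw [pow_succ, Nat.mul_comm] : 2^(n+1) = 2 * 2^n) k.divNat).divNat
        = (Fin.cast hh k).divNat := by
    intro k
    apply Fin.ext
    simp only [Fin.coe_divNat, Fin.coe_cast]
    rw [Nat.div_div_eq_div_mul]
    congr 1
    ring
  have hB : ∀ k : Fin (2 ^ (n + 1) * p),
      (Fin.cast (by rw [pow_succ, Nat.mul_comm] : 2^(n+1) = 2 * 2^n) k.divNat).modNat
        = (Fin.cast hh k).modNat.divNat := by
    intro k
    apply Fin.ext
    simp only [Fin.coe_modNat, Fin.coe_divNat, Fin.coe_cast]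
    rw [show (2:ℕ) ^ n * p = p * 2 ^ n by ring, Nat.mod_mul_right_div_self]
  have hC : ∀ k : Fin (2 ^ (n + 1) * p),
      k.modNat = (Fin.cast hh k).modNat.modNat := by
    intro k
    apply Fin.ext
    simp only [Fin.coe_modNat, Fin.coe_cast]
    rw [Nat.mod_mod_of_dvd _ (dvd_mul_left p (2 ^ n))]
  rw [hA i, hA j, hB i, hB j, hC i, hC j, mul_assoc]

end Entries

lemma spec_T2pow0 : spec (T2pow 0) 1 = 1 := by
  obtain ⟨I, hc, hv⟩ := spec_exists (T2pow 0) (by norm_num) (le_refl 1)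
  rw [← hv]
  have hne : I.Nonempty := Finset.card_pos.mp (by omega)
  apply le_antisymm
  · have := minDist_le_N (T2pow 0) hne
    simpa using this
  · apply le_minDist (T2pow 0) hne
    intro u hu _
    have : Matrix.vecMul u (T2pow 0) = u := by
      show Matrix.vecMul u (1 : Matrix (Fin (2^0)) (Fin (2^0)) F2) = u
      exact Matrix.vecMul_one u
    rw [this]
    exact hammingNorm_pos_iff.mpr hu

lemma prod_multiset {a b : ℕ} (f : Fin a → ℕ) (g : Fin b → ℕ) :
    ((Finset.univ : Finset (Fin a × Fin b)).val).map (fun ij => f ij.1 * g ij.2)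
      = (((Finset.univ : Finset (Fin a)).val).map f).bind
          (fun x => (((Finset.univ : Finset (Fin b)).val).map g).map (fun y => x * y)) := by
  rw [← Finset.univ_product_univ, Finset.product_val]
  show (((Finset.univ : Finset (Fin a)).val).bind
      (fun x => ((Finset.univ : Finset (Fin b)).val).map (Prod.mk x))).map
        (fun ij => f ij.1 * g ij.2) = _
  rw [Multiset.map_bind, Multiset.bind_map]
  apply Multiset.bind_congr
  intro x _
  rw [Multiset.map_map, Multiset.map_map]
  rfl
lemma kthLargest_recover' {M : Multiset ℕ} {L : ℕ} (h : Multiset.card M = L) :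
    ((Finset.univ : Finset (Fin L)).val).map (fun i => kthLargest M (i.val + 1)) = M := by
  subst h
  exact kthLargest_recover M

lemma valMS_two_mul {N : ℕ} (G : Matrix (Fin N) (Fin N) F2) :
    valMS N (fun k => 2 * spec G k) = Multiset.map (fun x => 2 * x) (valMS N (spec G)) := by
  rw [valMS, valMS, Multiset.map_map]
  rfl

lemma sigmaMS_succ (n : ℕ) :
    valMS (2 ^ (n + 1)) (spec (T2pow (n + 1)))
      = Multiset.map (fun x => 2 * x) (valMS (2 ^ n) (spec (T2pow n)))
        + valMS (2 ^ n) (spec (T2pow n)) := by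
  have h2 : (2:ℕ) ^ (n + 1) = 2 * 2 ^ n := by rw [pow_succ]; ring
  have hcard : Multiset.card (mergeMS (T2pow n)) = 2 ^ (n + 1) := by
    rw [mergeMS_card]; omega
  have hspec : ∀ K, 1 ≤ K → K ≤ 2 ^ (n + 1) →
      spec (T2pow (n + 1)) K = kthLargest (mergeMS (T2pow n)) K := by
    intro K h1 hK
    have e1 : spec (T2pow (n + 1)) K = spec (kron T2 (T2pow n)) K := by
      have heq : T2pow (n + 1) = fun i j => kron T2 (T2pow n)
          (finCongr h2 i) (finCongr h2 j) := by
        funext i j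
        exact T2pow_succ_apply n i j
      rw [heq]
      exact spec_congr (finCongr h2) (finCongr h2) (kron T2 (T2pow n)) K
    rw [e1]
    exact spec_kron_T2 (T2pow n) h1 (by omega)
  calc valMS (2 ^ (n + 1)) (spec (T2pow (n + 1)))
      = Multiset.map (fun i : Fin (2 ^ (n + 1)) =>
          kthLargest (mergeMS (T2pow n)) (i.val + 1)) Finset.univ.val := by
        apply Multiset.map_congr rfl
        intro i _
        exact hspec _ (by omega) (by have := i.isLt; omega)
    _ = mergeMS (T2pow n) := kthLargest_recover' hcard
    _ = _ := by rw [mergeMS, valMS_two_mul]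

theorem spectrum_of_kron_T2pow
    (p : ℕ) (hp : 1 ≤ p) (Tp : Matrix (Fin p) (Fin p) F2) (hTp : IsUnit Tp)
    (n : ℕ) (K : ℕ) (hK1 : 1 ≤ K) (hK2 : K ≤ 2 ^ n * p) :
    spec (kron (T2pow n) Tp) K =
      kthLargest
        (((Finset.univ : Finset (Fin (2 ^ n) × Fin p)).val).map
          (fun ij => spec (T2pow n) (ij.1.val + 1) * spec Tp (ij.2.val + 1))) K := by
  induction n generalizing K with
  | zero =>
    have e0 : spec (kron (T2pow 0) Tp) K = spec Tp K := by
      rw [kron_one_eq]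
      exact spec_congr (finCongr (one_mul p)) (finCongr (one_mul p)) Tp K
    have hM : ((Finset.univ : Finset (Fin (2 ^ 0) × Fin p)).val).map
        (fun ij => spec (T2pow 0) (ij.1.val + 1) * spec Tp (ij.2.val + 1))
        = valMS p (spec Tp) := by
      rw [prod_multiset (fun i : Fin (2 ^ 0) => spec (T2pow 0) (i.val + 1))
        (fun j : Fin p => spec Tp (j.val + 1))]
      have hone : ((Finset.univ : Finset (Fin (2 ^ 0))).val).map
          (fun i => spec (T2pow 0) (i.val + 1)) = {1} := by
        have huniv : (Finset.univ : Finset (Fin (2 ^ 0))) = {⟨0, by norm_num⟩} := by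
          apply Finset.eq_singleton_iff_unique_mem.mpr
          exact ⟨Finset.mem_univ _, fun x _ => Fin.ext (by omega)⟩
        rw [huniv]
        simp [spec_T2pow0]
      rw [hone, Multiset.singleton_bind, valMS, Multiset.map_map]
      apply Multiset.map_congr rfl
      intro j _
      show (1 : ℕ) * spec Tp (j.val + 1) = spec Tp (j.val + 1)
      rw [one_mul]
    rw [e0, hM, kthLargest_valMS (spec_anti' Tp) hK1 (by omega)]
  | succ n ih =>
    have hh : 2 ^ (n + 1) * p = 2 * (2 ^ n * p) := by rw [pow_succ]; ring
    have e1 : spec (kron (T2pow (n + 1)) Tp) K = spec (kron T2 (kron (T2pow n) Tp)) K := by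
      rw [kron_succ_eq]
      exact spec_congr (finCongr hh) (finCongr hh) _ K
    rw [e1, spec_kron_T2 _ hK1 (by omega)]
    congr 1
    -- identify multisets
    have hcardMn : Multiset.card (((Finset.univ : Finset (Fin (2 ^ n) × Fin p)).val).map
        (fun ij => spec (T2pow n) (ij.1.val + 1) * spec Tp (ij.2.val + 1))) = 2 ^ n * p := by
      rw [Multiset.card_map]
      simp
    have hX : valMS (2 ^ n * p) (spec (kron (T2pow n) Tp))
        = ((Finset.univ : Finset (Fin (2 ^ n) × Fin p)).val).map
          (fun ij => spec (T2pow n) (ij.1.val + 1) * spec Tp (ij.2.val + 1)) := by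
      calc valMS (2 ^ n * p) (spec (kron (T2pow n) Tp))
          = Multiset.map (fun i : Fin (2 ^ n * p) => kthLargest
              (((Finset.univ : Finset (Fin (2 ^ n) × Fin p)).val).map
                (fun ij => spec (T2pow n) (ij.1.val + 1) * spec Tp (ij.2.val + 1)))
              (i.val + 1)) Finset.univ.val := by
            apply Multiset.map_congr rfl
            intro i _
            exact ih _ (by omega) (by have := i.isLt; omega)
        _ = _ := kthLargest_recover' hcardMn
    rw [mergeMS, valMS_two_mul, hX]
    -- now prove  map(2*) Mn + Mn = M(n+1)
    rw [prod_multiset (fun i : Fin (2 ^ (n + 1)) => spec (T2pow (n + 1)) (i.val + 1))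
      (fun j : Fin p => spec Tp (j.val + 1))]
    have hsig := sigmaMS_succ n
    rw [valMS] at hsig
    rw [hsig, Multiset.add_bind]
    set τ := ((Finset.univ : Finset (Fin p)).val).map (fun j : Fin p => spec Tp (j.val + 1))
      with hτ
    set σ := valMS (2 ^ n) (spec (T2pow n)) with hσ
    have hbm : (Multiset.map (fun x => 2 * x) σ).bind (fun x => τ.map (fun y => x * y))
        = Multiset.map (fun x => 2 * x) (σ.bind (fun x => τ.map (fun y => x * y))) := by
      rw [Multiset.bind_map, Multiset.map_bind]
      apply Multiset.bind_congr
      intro x _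
      rw [hτ, Multiset.map_map, Multiset.map_map, Multiset.map_map]
      apply Multiset.map_congr rfl
      intro j _
      show 2 * x * spec Tp (j.val + 1) = 2 * (x * spec Tp (j.val + 1))
      ring
    rw [hbm]
    have hMn : σ.bind (fun x => τ.map (fun y => x * y))
        = ((Finset.univ : Finset (Fin (2 ^ n) × Fin p)).val).map
          (fun ij => spec (T2pow n) (ij.1.val + 1) * spec Tp (ij.2.val + 1)) := by
      rw [hσ, hτ, valMS]
      exact (prod_multiset (fun i : Fin (2 ^ n) => spec (T2pow n) (i.val + 1))
        (fun j : Fin p => spec Tp (j.val + 1))).symm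
    rw [hMn]
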